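/- Correctness of the CEGAR termination condition: suppose Algorithm returns true with trap set I, i.e., C₀ ∉ 𝔅, every O ∈ I is a trap, and there is no pair C ⊢ C' with C intersecting all O ∈ I and C' ∈ 𝔅. Then no configuration in 𝔅 is reachable from C₀. -/
import Mathlib


/-- correctness of the CEGAR termination condition: if `C₀` is not bad,
    every `O ∈ I` is a trap, and no step from a configuration intersecting all of `I`
    reaches a bad configuration, then no bad configuration is reachable. -/
theorem cegar_termination_sound {Config Pow : Type*} (C₀ : Config)
    (step : Config → Config → Prop) (inter : Config → Pow → Prop)
    (Bad : Set Config) (I : Set Pow)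
    (hinit : C₀ ∉ Bad)
    (htrap : ∀ O ∈ I, inter C₀ O ∧ ∀ C C', step C C' → inter C O → inter C' O)
    (hnopair : ¬∃ C C', step C C' ∧ (∀ O ∈ I, inter C O) ∧ C' ∈ Bad) :
    ∀ C, Relation.ReflTransGen step C₀ C → C ∉ Bad := by
  have hall : ∀ C, Relation.ReflTransGen step C₀ C → ∀ O ∈ I, inter C O := by
    intro C h
    induction h with
    | refl => exact fun O hO => (htrap O hO).1
    | tail hs hstep ih => exact fun O hO => (htrap O hO).2 _ _ hstep (ih O hO)
  intro C h hBad
  induction h with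
  | refl => exact hinit hBad
  | @tail b c hs hstep ih =>
    exact hnopair ⟨b, c, hstep, hall b hs, hBad⟩
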